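/- arXiv:2306.06383 — 2 statements merged into one kernel-verified Lean document; each statement's English description precedes it below -/
import Mathlib

section
/- Let D be a nonempty finite family of nonzero vectors in ℝ^n. Then D is a positive spanning set of ℝ^n if and only if cm(D) > 0. -/
open scoped RealInnerProductSpace

noncomputable section

/-- Shorthand for the Euclidean space `ℝ^n`. -/
abbrev Euc (n : ℕ) := EuclideanSpace ℝ (Fin n)

/-- The positive span of a finite family of vectors: the set of all
linear combinations with nonnegative coefficients. -/
def pspan {n : ℕ} {ι : Type*} [Fintype ι] (D : ι → Euc n) : Set (Euc n) :=
  { x | ∃ c : ι → ℝ, (∀ i, 0 ≤ c i) ∧ x = ∑ i, c i • D i }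

/-- `D` is a positive spanning set (PSS) of the subspace `L`. -/
def IsPSS {n : ℕ} {ι : Type*} [Fintype ι] (D : ι → Euc n)
    (L : Submodule ℝ (Euc n)) : Prop :=
  pspan D = (L : Set (Euc n))

/-- `D` is a positive basis of `L`: a PSS of `L` such that removing any single
element (one instance of it) destroys the positive spanning property. -/
def IsPosBasis {n : ℕ} {ι : Type*} [Fintype ι] [DecidableEq ι] (D : ι → Euc n)
    (L : Submodule ℝ (Euc n)) : Prop :=
  IsPSS D L ∧ ∀ i : ι, ¬ IsPSS (fun j : {j : ι // j ≠ i} => D j) L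

/-- `D` is a minimal positive basis of `L`: a positive basis with `dim L + 1` elements. -/
def IsMinPosBasis {n : ℕ} {ι : Type*} [Fintype ι] [DecidableEq ι] (D : ι → Euc n)
    (L : Submodule ℝ (Euc n)) : Prop :=
  IsPosBasis D L ∧ Fintype.card ι = Module.finrank ℝ L + 1

/-- The positive `k`-span of a finite family `D`: the intersection of the positive
spans of all of its subfamilies of cardinality at least `|D| - k + 1`. -/
def pspanK {n : ℕ} {ι : Type*} [Fintype ι] (k : ℕ) (D : ι → Euc n) : Set (Euc n) :=
  ⋂ (S : Finset ι) (_ : Fintype.card ι - k + 1 ≤ S.card),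
    pspan (fun j : {j : ι // j ∈ S} => D (j : ι))

/-- `D` is a positive `k`-spanning set (PkSS) of `L`. -/
def IsPkSS {n : ℕ} {ι : Type*} [Fintype ι] (k : ℕ) (D : ι → Euc n)
    (L : Submodule ℝ (Euc n)) : Prop :=
  pspanK k D = (L : Set (Euc n))

/-- The `k`-span of a finite family `D`: the intersection of the linear spans of
all of its subfamilies of cardinality at least `|D| - k + 1`. -/
def spanK {n : ℕ} {ι : Type*} [Fintype ι] (k : ℕ) (D : ι → Euc n) : Set (Euc n) :=
  ⋂ (S : Finset ι) (_ : Fintype.card ι - k + 1 ≤ S.card),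
    (Submodule.span ℝ (D '' (S : Set ι)) : Set (Euc n))

/-- `D` is a positive `k`-basis of `L`: a PkSS of `L` such that removing any single
element destroys the positive `k`-spanning property. -/
def IsPkBasis {n : ℕ} {ι : Type*} [Fintype ι] [DecidableEq ι] (k : ℕ) (D : ι → Euc n)
    (L : Submodule ℝ (Euc n)) : Prop :=
  IsPkSS k D L ∧ ∀ i : ι, ¬ IsPkSS k (fun j : {j : ι // j ≠ i} => D j) L

/-- The cosine measure of a finite family of nonzero vectors. -/
def cosm {n : ℕ} {ι : Type*} [Fintype ι] (D : ι → Euc n) : ℝ :=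
  ⨅ u : {u : Euc n // ‖u‖ = 1}, ⨆ i : ι, ⟪(u : Euc n), D i⟫ / ‖D i‖

/-- The `k`-cosine measure of a finite family of nonzero vectors. -/
def cosmK {n : ℕ} {ι : Type*} [Fintype ι] (k : ℕ) (D : ι → Euc n) : ℝ :=
  ⨅ u : {u : Euc n // ‖u‖ = 1},
    ⨆ S : {S : Finset ι // S.card = k},
      ⨅ j : {j : ι // j ∈ (S : Finset ι)}, ⟪(u : Euc n), D (j : ι)⟫ / ‖D (j : ι)‖

/-- The cosine vector set: the unit vectors attaining the cosine measure. -/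
def cosVSet {n : ℕ} {ι : Type*} [Fintype ι] (D : ι → Euc n) : Set (Euc n) :=
  { u | ‖u‖ = 1 ∧ (⨆ i : ι, ⟪u, D i⟫ / ‖D i‖) = cosm D }

/-- `D` is orthogonally structured with decomposition given by the pairwise orthogonal
subspaces `L i` (whose sum is `ℝ^n`) and the grouping map `g`: the subfamily of `D`
corresponding to each fiber of `g` is a minimal positive basis of the associated subspace. -/
def IsOSPBDecomp {n s : ℕ} {ι : Type*} [Fintype ι] [DecidableEq ι] (D : ι → Euc n)
    (L : Fin s → Submodule ℝ (Euc n)) (g : ι → Fin s) : Prop :=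
  (∀ i i' : Fin s, i ≠ i' → ∀ x ∈ L i, ∀ y ∈ L i', ⟪x, y⟫ = 0) ∧
  (⨆ i, L i) = (⊤ : Submodule ℝ (Euc n)) ∧
  ∀ i : Fin s, IsMinPosBasis (fun j : {j : ι // g j = i} => D (j : ι)) (L i)

/-- The Gram matrix `G(B) = BᵀB` of the subfamily of `D` indexed by `S`. -/
def gramSub {n : ℕ} {ι : Type*} [Fintype ι] (D : ι → Euc n) (S : Finset ι) :
    Matrix {j : ι // j ∈ S} {j : ι // j ∈ S} ℝ :=
  Matrix.of fun j j' => ⟪D (j : ι), D (j' : ι)⟫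

/-- The quantity `γ_B = 1/√(1ᵀ G(B)⁻¹ 1)` associated with the subfamily of `D`
indexed by `S`. -/
def gammaSub {n : ℕ} {ι : Type*} [Fintype ι] [DecidableEq ι] (D : ι → Euc n)
    (S : Finset ι) : ℝ :=
  1 / Real.sqrt (∑ j : {j : ι // j ∈ S}, ∑ j' : {j : ι // j ∈ S}, (gramSub D S)⁻¹ j j')

/-- The subfamily of `D` indexed by `S` is a linear basis of `L`. -/
def IsBasisSub {n : ℕ} {ι : Type*} [Fintype ι] (D : ι → Euc n) (S : Finset ι)
    (L : Submodule ℝ (Euc n)) : Prop :=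
  LinearIndependent ℝ (fun j : {j : ι // j ∈ S} => D (j : ι)) ∧
  Submodule.span ℝ (D '' (S : Set ι)) = L

/-- `R` is a rotation matrix: `RᵀR = I` and `det R = 1`. -/
def IsRotation {n : ℕ} (R : Matrix (Fin n) (Fin n) ℝ) : Prop :=
  R.transpose * R = 1 ∧ R.det = 1

/-- Action of an `n × n` matrix on the Euclidean space `ℝ^n`. -/
def rotAct {n : ℕ} (R : Matrix (Fin n) (Fin n) ℝ) (x : Euc n) : Euc n :=
  Matrix.toEuclideanLin R x

/-- The quantity `ρ_D` of Lemma 4.13, where `P i i'` denotes the orthogonal projection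
of `d_i` onto `L ∩ {v_{i'}}^⊥`. -/
def rhoQ {n : ℕ} {ι : Type*} [Fintype ι] (D : ι → Euc n) (P : ι → ι → Euc n) : ℝ :=
  ⨆ p : ι × ι, ⟪D p.1, P p.1 p.2⟫ / (‖D p.1‖ * ‖P p.1 p.2‖)

section Aux

variable {n : ℕ} {ι : Type*} [Fintype ι]

lemma pspan_zero_mem (D : ι → Euc n) : (0 : Euc n) ∈ pspan D :=
  ⟨0, fun _ => le_refl 0, by simp⟩

lemma pspan_smul_mem {D : ι → Euc n} {x : Euc n} (hx : x ∈ pspan D) {t : ℝ} (ht : 0 ≤ t) :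
    t • x ∈ pspan D := by
  obtain ⟨c, hc, rfl⟩ := hx
  exact ⟨fun i => t * c i, fun i => mul_nonneg ht (hc i), by
    simp [Finset.smul_sum, mul_smul]⟩

lemma pspan_convex (D : ι → Euc n) : Convex ℝ (pspan D) := by
  rintro x ⟨c, hc, rfl⟩ y ⟨c', hc', rfl⟩ a b ha hb _
  refine ⟨fun i => a * c i + b * c' i,
    fun i => add_nonneg (mul_nonneg ha (hc i)) (mul_nonneg hb (hc' i)), ?_⟩
  simp only [Finset.smul_sum, add_smul, mul_smul, ← Finset.sum_add_distrib]

lemma pspan_unit_mem (D : ι → Euc n) (i : ι) : ‖D i‖⁻¹ • D i ∈ pspan D := by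
  classical
  refine ⟨fun j => if j = i then ‖D i‖⁻¹ else 0, fun j => ?_, ?_⟩
  · dsimp only; split <;> simp [inv_nonneg.2 (norm_nonneg _)]
  · simp [ite_smul]

end Aux

/-- Proposition 2.10: a nonempty finite family of nonzero vectors
is a positive spanning set of `ℝ^n` iff its cosine measure is positive. -/
theorem pss_iff_cosm_pos {n : ℕ} {ι : Type*} [Fintype ι] [Nonempty ι]
    (D : ι → Euc n) (h0 : ∀ i, D i ≠ 0) :
    IsPSS D (⊤ : Submodule ℝ (Euc n)) ↔ 0 < cosm D := by
  classical
  set f : Euc n → ℝ := fun u => ⨆ i, ⟪u, D i⟫ / ‖D i‖ with hf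
  have hDpos : ∀ i, (0:ℝ) < ‖D i‖ := fun i => norm_pos_iff.2 (h0 i)
  have hbdd : ∀ u : Euc n, BddAbove (Set.range fun i => ⟪u, D i⟫ / ‖D i‖) :=
    fun u => Set.Finite.bddAbove (Set.finite_range _)
  have hlb : ∀ u : Euc n, -‖u‖ ≤ f u := by
    intro u
    refine le_trans ?_ (le_ciSup (hbdd u) (Classical.arbitrary ι))
    rw [le_div_iff₀ (hDpos _)]
    nlinarith [abs_real_inner_le_norm u (D (Classical.arbitrary ι)),
      abs_le.1 (le_refl |⟪u, D (Classical.arbitrary ι)⟫|), neg_abs_le ⟪u, D (Classical.arbitrary ι)⟫]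
  have hbb : BddBelow (Set.range fun u : {u : Euc n // ‖u‖ = 1} =>
      ⨆ i, ⟪(u : Euc n), D i⟫ / ‖D i‖) := by
    refine ⟨-1, ?_⟩
    rintro _ ⟨u, rfl⟩
    have := hlb (u : Euc n)
    rw [u.2] at this
    exact this
  have hcosm_le : ∀ u : Euc n, ‖u‖ = 1 → cosm D ≤ f u := by
    intro u hu
    exact ciInf_le hbb ⟨u, hu⟩
  constructor
  · intro hPSS
    have hPSS' : pspan D = Set.univ := by
      rw [hPSS]; rfl
    -- continuity of f
    have hcont : Continuous f := by
      have hne : (Finset.univ : Finset ι).Nonempty := Finset.univ_nonempty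
      have : f = fun u => Finset.univ.sup' hne (fun i => ⟪u, D i⟫ / ‖D i‖) := by
        funext u
        rw [hf]
        exact (Finset.sup'_univ_eq_ciSup _).symm
      rw [this]
      exact Continuous.finset_sup'_apply hne fun i _ =>
        ((continuous_id.inner continuous_const).div_const _)
    -- a unit vector exists
    obtain ⟨i₀⟩ := ‹Nonempty ι›
    have hu₁ : ‖(‖D i₀‖⁻¹ • D i₀ : Euc n)‖ = 1 := by
      rw [norm_smul, norm_inv, norm_norm, inv_mul_cancel₀ (hDpos i₀).ne']
    have hsne : ((Metric.sphere (0:Euc n) 1) : Set (Euc n)).Nonempty :=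
      ⟨_, by rwa [mem_sphere_zero_iff_norm]⟩
    obtain ⟨u₀, hu₀mem, hmin'⟩ :=
      (isCompact_sphere (0:Euc n) 1).exists_isMinOn hsne hcont.continuousOn
    have hmin : ∀ y ∈ Metric.sphere (0:Euc n) 1, f u₀ ≤ f y := fun y hy => hmin' hy
    have hu₀ : ‖u₀‖ = 1 := mem_sphere_zero_iff_norm.1 hu₀mem
    -- f u₀ > 0
    have hu₀mem' : u₀ ∈ pspan D := by rw [hPSS']; trivial
    obtain ⟨c, hc, hrep⟩ := hu₀mem'
    have hsum : ∑ i, c i * ⟪u₀, D i⟫ = 1 := by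
      have h1 : ⟪u₀, u₀⟫ = 1 := by
        rw [real_inner_self_eq_norm_sq, hu₀]; norm_num
      calc ∑ i, c i * ⟪u₀, D i⟫ = ⟪u₀, ∑ i, c i • D i⟫ := by
            rw [inner_sum]
            exact Finset.sum_congr rfl fun i _ => (real_inner_smul_right _ _ _).symm
        _ = 1 := by rw [← hrep, h1]
    have hex : ∃ i, 0 < ⟪u₀, D i⟫ := by
      by_contra hcon
      push_neg at hcon
      have : ∑ i, c i * ⟪u₀, D i⟫ ≤ 0 :=
        Finset.sum_nonpos fun i _ => mul_nonpos_of_nonneg_of_nonpos (hc i) (hcon i)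
      linarith
    obtain ⟨i, hi⟩ := hex
    have hfu₀ : 0 < f u₀ :=
      lt_of_lt_of_le (div_pos hi (hDpos i)) (le_ciSup (hbdd u₀) i)
    have : f u₀ ≤ cosm D := by
      have : Nonempty {u : Euc n // ‖u‖ = 1} := ⟨⟨u₀, hu₀⟩⟩
      refine le_ciInf fun v => ?_
      exact hmin (v : Euc n) (by rw [mem_sphere_zero_iff_norm]; exact v.2)
    linarith
  · intro hpos
    unfold IsPSS
    rw [Submodule.top_coe, Set.eq_univ_iff_forall]
    intro x
    rcases eq_or_ne x 0 with rfl | hx0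
    · exact pspan_zero_mem D
    have hxn : (0:ℝ) < ‖x‖ := norm_pos_iff.2 hx0
    set D' : ι → Euc n := fun i => ‖D i‖⁻¹ • D i with hD'
    set K : Set (Euc n) := convexHull ℝ (Set.range D') with hK
    have hKclosed : IsClosed K := (Set.finite_range D').isClosed_convexHull (𝕜 := ℝ)
    have hKsub : K ⊆ pspan D :=
      convexHull_min (by rintro _ ⟨i, rfl⟩; exact pspan_unit_mem D i) (pspan_convex D)
    set x' : Euc n := (cosm D / (2 * ‖x‖)) • x with hx'
    have hx'norm : ‖x'‖ = cosm D / 2 := by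
      rw [hx', norm_smul, Real.norm_eq_abs, abs_of_pos (by positivity)]
      field_simp
    have hx'K : x' ∈ K := by
      by_contra hxK
      obtain ⟨φ, u, hφK, hφx⟩ :=
        geometric_hahn_banach_closed_point (convex_convexHull ℝ _) hKclosed hxK
      set v : Euc n := (InnerProductSpace.toDual ℝ (Euc n)).symm φ with hv
      have hφeq : ∀ y : Euc n, φ y = ⟪v, y⟫ := by
        intro y
        rw [hv, ← InnerProductSpace.toDual_apply_apply,
          LinearIsometryEquiv.apply_symm_apply]
      obtain ⟨i₀⟩ := ‹Nonempty ι›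
      have hD'K : ∀ i, D' i ∈ K := fun i => subset_convexHull ℝ _ ⟨i, rfl⟩
      have hvne : v ≠ 0 := by
        intro h
        have h1 := hφK (D' i₀) (hD'K i₀)
        have h2 := hφx
        rw [hφeq, h, inner_zero_left] at h1
        rw [hφeq, h, inner_zero_left] at h2
        linarith
      have hvn : (0:ℝ) < ‖v‖ := norm_pos_iff.2 hvne
      set w : Euc n := ‖v‖⁻¹ • v with hw
      have hwn : ‖w‖ = 1 := by
        rw [hw, norm_smul, norm_inv, norm_norm, inv_mul_cancel₀ hvn.ne']
      have hineq : ∀ i, ⟪v, D' i⟫ < ‖v‖ * (cosm D / 2) := by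
        intro i
        have h1 : φ (D' i) < u := hφK (D' i) (hD'K i)
        have h2 : u < φ x' := hφx
        have h3 : ⟪v, x'⟫ ≤ ‖v‖ * ‖x'‖ := real_inner_le_norm v x'
        rw [hφeq] at h1 h2
        rw [hx'norm] at h3
        linarith
      have hkey : ∀ i, ⟪w, D i⟫ / ‖D i‖ < cosm D / 2 := by
        intro i
        have e1 : ⟪w, D i⟫ / ‖D i‖ = ‖v‖⁻¹ * ⟪v, D' i⟫ := by
          rw [hw, real_inner_smul_left, hD']
          simp only [real_inner_smul_right]
          field_simp
        rw [e1]
        calc ‖v‖⁻¹ * ⟪v, D' i⟫ < ‖v‖⁻¹ * (‖v‖ * (cosm D / 2)) :=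
              mul_lt_mul_of_pos_left (hineq i) (by positivity)
          _ = cosm D / 2 := by field_simp
      have hfw1 : f w ≤ cosm D / 2 := ciSup_le fun i => (hkey i).le
      have hfw2 : cosm D ≤ f w := hcosm_le w hwn
      linarith
    have hx'mem : x' ∈ pspan D := hKsub hx'K
    have : x = (2 * ‖x‖ / cosm D) • x' := by
      rw [hx', smul_smul]
      rw [div_mul_div_comm]
      rw [mul_comm (2 * ‖x‖) (cosm D)]
      rw [div_self (by positivity), one_smul]
    rw [this]
    exact pspan_smul_mem hx'mem (by positivity)
end
end

section
/- Let 𝕃 be a linear subspace of ℝ^n and D a finite family of nonzero vectors in 𝕃. The following statements are equivalent: (i) D is a positive spanning set of 𝕃; (ii) for every nonzero vector u ∈ 𝕃 there exists an element d ∈ D such that uᵀd > 0; (iii) span(D) = 𝕃 and the zero vector can be written as a linear combination of the elements of D with all coefficients strictly positive. -/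
open scoped RealInnerProductSpace

noncomputable section

namespace PSSAux

variable {n : ℕ} {ι : Type*} [Fintype ι]

lemma sum_subtype_eq (T : Finset ι) (f : ι → Euc n) (hf : ∀ i ∉ T, f i = 0) :
    ∑ i : {j : ι // j ∈ T}, f (i : ι) = ∑ i, f i := by
  rw [Finset.sum_coe_sort T f]
  exact Finset.sum_subset (Finset.subset_univ T) (fun i _ hi => hf i hi)

lemma mem_pspan_of_support (D : ι → Euc n) (T : Finset ι) (c : ι → ℝ)
    (hc : ∀ i, 0 ≤ c i) (hsupp : ∀ i ∉ T, c i = 0) :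
    (∑ i, c i • D i) ∈ pspan (fun i : {j : ι // j ∈ T} => D (i : ι)) := by
  refine ⟨fun i => c i, fun i => hc i, ?_⟩
  exact (sum_subtype_eq T (fun i => c i • D i)
    (fun i hi => by show c i • D i = 0; rw [hsupp i hi, zero_smul])).symm

lemma pspan_sub_subset (D : ι → Euc n) (T : Finset ι) :
    pspan (fun i : {j : ι // j ∈ T} => D (i : ι)) ⊆ pspan D := by
  classical
  rintro x ⟨c, hc, rfl⟩
  set f : ι → ℝ := fun i => if h : i ∈ T then c ⟨i, h⟩ else 0 with hf
  refine ⟨f, fun i => ?_, ?_⟩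
  · by_cases h : i ∈ T <;> simp [hf, h, hc]
  · rw [← sum_subtype_eq T (fun i => f i • D i)
      (fun i hi => by simp [hf, hi])]
    refine Finset.sum_congr rfl fun i _ => ?_
    simp [hf, i.2]

/-- Conic Carathéodory: any element of the positive span lies in the positive
span of a linearly independent subfamily. -/
lemma carath (D : ι → Euc n) (N : ℕ) :
    ∀ S : Finset ι, S.card ≤ N → ∀ c : ι → ℝ,
      (∀ i, 0 ≤ c i) → (∀ i ∉ S, c i = 0) →
      ∃ T : Finset ι, LinearIndependent ℝ (fun i : {j : ι // j ∈ T} => D (i : ι)) ∧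
        (∑ i, c i • D i) ∈ pspan (fun i : {j : ι // j ∈ T} => D (i : ι)) := by
  classical
  induction N with
  | zero =>
      intro S hS c hc hsupp
      have hSe : S = ∅ := Finset.card_eq_zero.mp (Nat.le_zero.mp hS)
      subst hSe
      refine ⟨∅, ?_, mem_pspan_of_support D ∅ c hc hsupp⟩
      have : IsEmpty {j : ι // j ∈ (∅ : Finset ι)} := ⟨fun j => absurd j.2 (Finset.notMem_empty _)⟩
      exact linearIndependent_empty_type
  | succ N ih =>
      intro S hS c hc hsupp
      by_cases hLI : LinearIndependent ℝ (fun i : {j : ι // j ∈ S} => D (i : ι))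
      · exact ⟨S, hLI, mem_pspan_of_support D S c hc hsupp⟩
      · obtain ⟨g, hgsum, j0, hgj0⟩ := Fintype.not_linearIndependent_iff.mp hLI
        -- normalize so that some coefficient is positive
        obtain ⟨g, hgsum, j0, hgj0⟩ :
            ∃ g : {j : ι // j ∈ S} → ℝ,
              (∑ i, g i • D (i : ι)) = 0 ∧ ∃ j0, 0 < g j0 := by
          rcases hgj0.lt_or_gt with h | h
          · exact ⟨-g, by simp only [Pi.neg_apply, neg_smul, Finset.sum_neg_distrib, hgsum, neg_zero], j0, by simpa using h⟩
          · exact ⟨g, hgsum, j0, h⟩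
        -- extend g to a function on ι supported on S
        set b : ι → ℝ := fun i => if h : i ∈ S then g ⟨i, h⟩ else 0 with hb
        have hbS : ∀ i ∉ S, b i = 0 := fun i hi => by simp [hb, hi]
        have hbsum : ∑ i, b i • D i = 0 := by
          rw [← sum_subtype_eq S (fun i => b i • D i)
            (fun i hi => by show b i • D i = 0; rw [hbS i hi, zero_smul])]
          rw [← hgsum]
          refine Finset.sum_congr rfl fun i _ => ?_
          simp [hb, i.2]
        have hbpos : ∃ i ∈ S, 0 < b i := ⟨j0, j0.2, by simpa [hb, j0.2] using hgj0⟩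
        obtain ⟨i1, hi1S, hi1pos⟩ := hbpos
        set P : Finset ι := S.filter (fun i => 0 < b i) with hP
        have hPne : P.Nonempty := ⟨i1, Finset.mem_filter.mpr ⟨hi1S, hi1pos⟩⟩
        set t : ℝ := P.inf' hPne (fun i => c i / b i) with ht
        obtain ⟨i0, hi0P, hi0eq⟩ := Finset.exists_mem_eq_inf' hPne (fun i => c i / b i)
        have hi0S : i0 ∈ S := (Finset.mem_filter.mp hi0P).1
        have hbi0 : 0 < b i0 := (Finset.mem_filter.mp hi0P).2
        have ht0 : 0 ≤ t := by
          rw [ht, hi0eq]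
          exact div_nonneg (hc i0) hbi0.le
        set c' : ι → ℝ := fun i => c i - t * b i with hc'
        have hc'nn : ∀ i, 0 ≤ c' i := by
          intro i
          by_cases hi : i ∈ P
          · have hbi : 0 < b i := (Finset.mem_filter.mp hi).2
            have hti : t ≤ c i / b i := by
              rw [ht]; exact Finset.inf'_le _ hi
            have : t * b i ≤ c i := (le_div_iff₀ hbi).mp hti
            simp [hc', sub_nonneg, this]
          · have hbi : b i ≤ 0 := by
              by_cases hiS : i ∈ S
              · by_contra h
                push_neg at h
                exact hi (Finset.mem_filter.mpr ⟨hiS, h⟩)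
              · simp [hbS i hiS]
            have : t * b i ≤ 0 := mul_nonpos_of_nonneg_of_nonpos ht0 hbi
            simp only [hc']
            linarith [hc i]
        have hc'supp : ∀ i ∉ S.erase i0, c' i = 0 := by
          intro i hi
          by_cases h : i = i0
          · subst h
            simp only [hc', ht, hi0eq]
            field_simp
            ring
          · have hiS : i ∉ S := fun hiS => hi (Finset.mem_erase.mpr ⟨h, hiS⟩)
            simp [hc', hsupp i hiS, hbS i hiS]
        have hcard : (S.erase i0).card ≤ N := by
          have := Finset.card_erase_of_mem hi0S
          omega
        have hsum : ∑ i, c' i • D i = ∑ i, c i • D i := by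
          simp only [hc', sub_smul, Finset.sum_sub_distrib, mul_smul]
          rw [← Finset.smul_sum, hbsum, smul_zero, sub_zero]
        obtain ⟨T, hT1, hT2⟩ := ih (S.erase i0) hcard c' hc'nn hc'supp
        rw [hsum] at hT2
        exact ⟨T, hT1, hT2⟩

lemma isClosed_pspan_of_linearIndependent (D : ι → Euc n)
    (h : LinearIndependent ℝ D) : IsClosed (pspan D) := by
  set φ : (ι → ℝ) →ₗ[ℝ] Euc n :=
    { toFun := fun c => ∑ i, c i • D i
      map_add' := fun c c' => by
        simp [add_smul, Finset.sum_add_distrib]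
      map_smul' := fun r c => by
        simp [smul_smul, Finset.smul_sum] } with hφ
  have hker : LinearMap.ker φ = ⊥ := by
    rw [LinearMap.ker_eq_bot']
    intro c hcz
    funext i
    exact Fintype.linearIndependent_iff.mp h c hcz i
  have hemb := LinearMap.isClosedEmbedding_of_injective hker
  have hclosed : IsClosed {c : ι → ℝ | ∀ i, 0 ≤ c i} := by
    have : {c : ι → ℝ | ∀ i, 0 ≤ c i} = ⋂ i, {c : ι → ℝ | 0 ≤ c i} := by
      ext c; simp [Set.mem_iInter]
    rw [this]
    exact isClosed_iInter fun i => isClosed_le continuous_const (continuous_apply i)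
  have himg : pspan D = φ '' {c : ι → ℝ | ∀ i, 0 ≤ c i} := by
    ext x
    constructor
    · rintro ⟨c, hc, rfl⟩; exact ⟨c, hc, rfl⟩
    · rintro ⟨c, hc, rfl⟩; exact ⟨c, hc, rfl⟩
  rw [himg]
  exact hemb.isClosedMap _ hclosed

lemma isClosed_pspan (D : ι → Euc n) : IsClosed (pspan D) := by
  classical
  have hcover : pspan D =
      ⋃ T : {T : Finset ι //
        LinearIndependent ℝ (fun i : {j : ι // j ∈ T} => D (i : ι))},
        pspan (fun i : {j : ι // j ∈ (T : Finset ι)} => D (i : ι)) := by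
    apply Set.Subset.antisymm
    · rintro x ⟨c, hc, rfl⟩
      obtain ⟨T, hT1, hT2⟩ := carath D (Finset.univ.card) Finset.univ le_rfl c hc
        (fun i hi => absurd (Finset.mem_univ i) hi)
      exact Set.mem_iUnion.mpr ⟨⟨T, hT1⟩, hT2⟩
    · refine Set.iUnion_subset fun T => pspan_sub_subset D T
  rw [hcover]
  exact isClosed_iUnion_of_finite fun T =>
    isClosed_pspan_of_linearIndependent _ T.2

/-- The positive span as a convex cone. -/
def pspanCone (D : ι → Euc n) : ConvexCone ℝ (Euc n) where
  carrier := pspan D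
  smul_mem' := by
    rintro r hr x ⟨c, hc, rfl⟩
    exact ⟨fun i => r * c i, fun i => mul_nonneg hr.le (hc i), by
      rw [Finset.smul_sum]; simp [smul_smul]⟩
  add_mem' := by
    rintro x ⟨c, hc, rfl⟩ y ⟨c', hc', rfl⟩
    exact ⟨fun i => c i + c' i, fun i => add_nonneg (hc i) (hc' i), by
      simp [add_smul, Finset.sum_add_distrib]⟩

lemma self_mem_pspan (D : ι → Euc n) (i : ι) : D i ∈ pspan D := by
  classical
  refine ⟨fun j => if j = i then 1 else 0, fun j => by positivity, ?_⟩
  simp [ite_smul]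

end PSSAux

/-- Lemma 2.2: characterizations of positive spanning sets:
(i) `D` is a PSS of `L`; (ii) every nonzero `u ∈ L` makes a positive dot product with
some element of `D`; (iii) `span(D) = L` and zero is a strictly positive combination
of the elements of `D`. -/
theorem pss_characterizations {n : ℕ} {ι : Type*} [Fintype ι]
    (L : Submodule ℝ (Euc n)) (D : ι → Euc n)
    (hmem : ∀ i, D i ∈ L) (h0 : ∀ i, D i ≠ 0) :
    (IsPSS D L ↔ ∀ u ∈ L, u ≠ 0 → ∃ i : ι, 0 < ⟪u, D i⟫) ∧
    (IsPSS D L ↔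
      Submodule.span ℝ (Set.range D) = L ∧
      ∃ c : ι → ℝ, (∀ i, 0 < c i) ∧ ∑ i, c i • D i = 0) := by
  classical
  have hsub : pspan D ⊆ (L : Set (Euc n)) := by
    rintro x ⟨c, hc, rfl⟩
    exact Submodule.sum_mem L fun i _ => Submodule.smul_mem L _ (hmem i)
  -- (i) → (ii)
  have h12 : IsPSS D L → ∀ u ∈ L, u ≠ 0 → ∃ i : ι, 0 < ⟪u, D i⟫ := by
    intro h u huL hu
    have hup : u ∈ pspan D := by rw [h]; exact huL
    obtain ⟨c, hc, hsum⟩ := hup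
    have hpos : 0 < ⟪u, u⟫ :=
      lt_of_not_ge fun hle => hu (real_inner_self_nonpos.mp hle)
    have hsum' : ⟪u, u⟫ = ∑ i, c i * ⟪u, D i⟫ := by
      nth_rewrite 2 [hsum]
      rw [inner_sum]
      exact Finset.sum_congr rfl fun i _ => real_inner_smul_right u (D i) (c i)
    by_contra hcon
    push_neg at hcon
    have : ⟪u, u⟫ ≤ 0 := by
      rw [hsum']
      exact Finset.sum_nonpos fun i _ =>
        mul_nonpos_of_nonneg_of_nonpos (hc i) (hcon i)
    linarith
  -- (ii) → (i)
  have h21 : (∀ u ∈ L, u ≠ 0 → ∃ i : ι, 0 < ⟪u, D i⟫) → IsPSS D L := by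
    intro h2
    refine Set.Subset.antisymm hsub fun u huL => ?_
    by_contra hu
    have hK : u ∉ PSSAux.pspanCone D := hu
    obtain ⟨y, hy1, hy2⟩ :=
      ProperCone.hyperplane_separation' (x₀ := u)
        ({ carrier := pspan D
           add_mem' := fun hx hy => (PSSAux.pspanCone D).add_mem' hx hy
           zero_mem' := ⟨fun _ => 0, fun _ => le_rfl, by simp⟩
           smul_mem' := by
             rintro r x ⟨c, hc, rfl⟩
             exact ⟨fun i => (r : ℝ) * c i, fun i => mul_nonneg r.2 (hc i), by
               rw [Finset.smul_sum]
               exact Finset.sum_congr rfl fun i _ => by rw [← smul_smul]; rfl⟩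
           isClosed' := PSSAux.isClosed_pspan D } : ProperCone ℝ (Euc n)) hK
    set w : Euc n := -(L.orthogonalProjectionOnto y : Euc n) with hw
    have hwL : w ∈ L := Submodule.neg_mem L (L.orthogonalProjectionOnto y).2
    have hproj : ∀ v ∈ L, ⟪(L.orthogonalProjectionOnto y : Euc n), v⟫ = ⟪y, v⟫ := by
      intro v hv
      have : ⟪y - (L.orthogonalProjectionOnto y : Euc n), v⟫ = 0 := L.starProjection_inner_eq_zero y v hv
      rw [inner_sub_left] at this
      linarith
    have hwu : 0 < ⟪w, u⟫ := by
      rw [hw, inner_neg_left, hproj u huL]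
      linarith [real_inner_comm u y]
    have hwne : w ≠ 0 := by
      intro h0
      rw [h0, inner_zero_left] at hwu
      exact lt_irrefl 0 hwu
    obtain ⟨i, hi⟩ := h2 w hwL hwne
    have hDiK : D i ∈ pspan D := PSSAux.self_mem_pspan D i
    have hle : 0 ≤ ⟪D i, y⟫ := hy1 (D i) hDiK
    have : ⟪w, D i⟫ ≤ 0 := by
      rw [hw, inner_neg_left, hproj (D i) (hmem i), real_inner_comm]
      linarith
    linarith
  -- (i) → (iii)
  have h13 : IsPSS D L →
      Submodule.span ℝ (Set.range D) = L ∧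
      ∃ c : ι → ℝ, (∀ i, 0 < c i) ∧ ∑ i, c i • D i = 0 := by
    intro h
    constructor
    · apply le_antisymm
      · rw [Submodule.span_le]
        rintro x ⟨i, rfl⟩
        exact hmem i
      · intro u huL
        have : u ∈ pspan D := by rw [h]; exact huL
        obtain ⟨c, hc, rfl⟩ := this
        exact Submodule.sum_mem _ fun i _ =>
          Submodule.smul_mem _ _ (Submodule.subset_span ⟨i, rfl⟩)
    · have hmemL : -∑ i, D i ∈ L :=
        Submodule.neg_mem L (Submodule.sum_mem L fun i _ => hmem i)
      have : -∑ i, D i ∈ pspan D := by rw [h]; exact hmemL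
      obtain ⟨c, hc, hsum⟩ := this
      refine ⟨fun i => c i + 1, fun i => by show 0 < c i + 1; linarith [hc i], ?_⟩
      have : ∑ i, (c i + 1) • D i = (∑ i, c i • D i) + ∑ i, D i := by
        simp [add_smul, Finset.sum_add_distrib]
      rw [this, ← hsum]
      simp
  -- (iii) → (i)
  have h31 : (Submodule.span ℝ (Set.range D) = L ∧
      ∃ c : ι → ℝ, (∀ i, 0 < c i) ∧ ∑ i, c i • D i = 0) → IsPSS D L := by
    rintro ⟨hspan, c, hcpos, hczero⟩
    refine Set.Subset.antisymm hsub fun u huL => ?_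
    have : u ∈ Submodule.span ℝ (Set.range D) := by rw [hspan]; exact huL
    obtain ⟨a, ha⟩ := Submodule.mem_span_range_iff_exists_fun ℝ |>.mp this
    set t : ℝ := ∑ i, |a i| / c i with htdef
    have hterm : ∀ i, (0:ℝ) ≤ |a i| / c i := fun i =>
      div_nonneg (abs_nonneg _) (hcpos i).le
    have ht0 : 0 ≤ t := Finset.sum_nonneg fun i _ => hterm i
    refine ⟨fun i => a i + t * c i, fun i => ?_, ?_⟩
    · show 0 ≤ a i + t * c i
      have hle : |a i| / c i ≤ t :=
        Finset.single_le_sum (fun j _ => hterm j) (Finset.mem_univ i)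
      have : |a i| ≤ t * c i := (div_le_iff₀ (hcpos i)).mp hle
      have := neg_abs_le (a i)
      linarith
    · have : ∑ i, (a i + t * c i) • D i
          = (∑ i, a i • D i) + t • ∑ i, c i • D i := by
        rw [Finset.smul_sum]
        simp [add_smul, Finset.sum_add_distrib, smul_smul]
      rw [this, ha, hczero, smul_zero, add_zero]
  exact ⟨⟨h12, h21⟩, ⟨h13, h31⟩⟩
end
end
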